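/- arXiv:1607.06679 — 2 statements merged into one kernel-verified Lean document; each statement's English description precedes it below -/
import Mathlib

section
/- Let K be a commutative ring, A an m×m matrix over K, B an n×m matrix and C an m×n matrix over K. Write det(x·I_n + B·C) = Σ_{i=0}^{n} x^{n-i} p_i, det(x·I_m + A) = Σ_{i=0}^{m} x^{m-i} q_i, and Σ_{P ∈ P_m} Σ_{Q ∈ Q_m} det(x·I_n + B·(QP)·A·(QP)^{-1}·C) = Σ_{i=0}^{n} x^{n-i} r_i in K[x]. Then for all 0 ≤ k ≤ n (with k ≤ m), r_k = 2^m · k! · (m−k)! · p_k · q_k, where 2^m, k! and (m−k)! denote the images of these natural numbers in K. -/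
open Polynomial

/-- The sign (diagonal `±1`) matrix determined by `ε : Fin m → Bool`. -/
def signMatrix (K : Type*) [CommRing K] {m : ℕ} (ε : Fin m → Bool) :
    Matrix (Fin m) (Fin m) K :=
  Matrix.diagonal (fun i => if ε i then 1 else -1)

section aux
open Matrix Finset

set_option linter.unusedSectionVars false
set_option linter.unusedVariables false

variable {K : Type*} [CommRing K] {m n : ℕ}

/-- Row expansion of `det (U * V)` over all index functions. -/
lemma det_mul_eq_sum_fn {α : Type*} [Fintype α] [DecidableEq α] {ι : Type*} [Fintype ι]
    [DecidableEq ι] (U : Matrix α ι K) (V : Matrix ι α K) :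
    (U * V).det = ∑ f : α → ι, (∏ i, U i (f i)) * (V.submatrix f id).det := by
  have h : (U * V) = Matrix.of fun i => ∑ j, U i j • V j := by
    ext i j; simp [Matrix.mul_apply]
  rw [h]
  calc Matrix.det (Matrix.of fun i => ∑ j, U i j • V j)
      = Matrix.detRowAlternating (fun i => ∑ j : ι, U i j • V j) := rfl
    _ = ∑ f : α → ι, Matrix.detRowAlternating (fun i => U i (f i) • V (f i)) :=
        Matrix.detRowAlternating.toMultilinearMap.map_sum (fun i j => U i j • V j)
    _ = ∑ f : α → ι, (∏ i, U i (f i)) * (V.submatrix f id).det := by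
        refine Finset.sum_congr rfl fun f _ => ?_
        have := Matrix.detRowAlternating.toMultilinearMap.map_smul_univ
            (fun i => U i (f i)) (fun i' => V (f i'))
        simp only [AlternatingMap.coe_multilinearMap] at this
        rw [this, smul_eq_mul]
        rfl

lemma det_submatrix_eq_zero {α ι : Type*} [Fintype α] [DecidableEq α]
    (V : Matrix ι α K) {f : α → ι} (hf : ¬ Function.Injective f) :
    (V.submatrix f id).det = 0 := by
  rw [Function.not_injective_iff] at hf
  obtain ⟨i, j, hij, hne⟩ := hf
  exact Matrix.det_zero_of_row_eq hne (by ext c; simp [hij])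

/-- Row expansion of `det (U * V)` over injective index functions. -/
lemma det_mul_eq_sum_inj {α : Type*} [Fintype α] [DecidableEq α] {ι : Type*} [Fintype ι]
    [DecidableEq ι] (U : Matrix α ι K) (V : Matrix ι α K) :
    (U * V).det = ∑ f ∈ Finset.univ.filter (fun f : α → ι => Function.Injective f),
      (∏ i, U i (f i)) * (V.submatrix f id).det := by
  rw [det_mul_eq_sum_fn]
  refine (Finset.sum_filter_of_ne fun f _ hne => ?_).symm
  by_contra hf
  exact hne (by rw [det_submatrix_eq_zero V hf, mul_zero])

/-- determinant of the principal minor indexed by a finset -/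
def mdet {s : ℕ} (M : Matrix (Fin s) (Fin s) K) (S : Finset (Fin s)) : K :=
  (M.submatrix (fun i : {x // x ∈ S} => (i : Fin s)) (fun i : {x // x ∈ S} => (i : Fin s))).det

/-- sum of principal k×k minors -/
def msum {s : ℕ} (M : Matrix (Fin s) (Fin s) K) (k : ℕ) : K :=
  ∑ S ∈ Finset.powersetCard k Finset.univ, mdet M S

lemma det_piecewise_one {s : ℕ} (P : Matrix (Fin s) (Fin s) K) (S : Finset (Fin s)) :
    Matrix.det (Matrix.of (S.piecewise P (1 : Matrix (Fin s) (Fin s) K))) = mdet P S := by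
  classical
  rw [← Matrix.det_submatrix_equiv_self (Equiv.sumCompl (· ∈ S))]
  have : (Matrix.of (S.piecewise P (1 : Matrix (Fin s) (Fin s) K))).submatrix
        (Equiv.sumCompl (· ∈ S)) (Equiv.sumCompl (· ∈ S)) =
      Matrix.fromBlocks
        (P.submatrix (fun i : {x // x ∈ S} => (i : Fin s)) (fun i : {x // x ∈ S} => (i : Fin s)))
        (P.submatrix (fun i : {x // x ∈ S} => (i : Fin s)) (fun i : {x // ¬ x ∈ S} => (i : Fin s)))
        0 1 := by
    ext i j
    cases i with
    | inl a => cases j with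
      | inl b =>
        simp [Finset.piecewise_eq_of_mem _ _ _ a.2, Finset.piecewise]
      | inr b =>
        simp [Finset.piecewise_eq_of_mem _ _ _ a.2, Finset.piecewise]
    | inr a => cases j with
      | inl b =>
        have hne : (a : Fin s) ≠ (b : Fin s) := fun h => a.2 (h ▸ b.2)
        simp [Finset.piecewise_eq_of_notMem _ _ _ a.2, Matrix.one_apply, hne, Finset.piecewise, a.2]
      | inr b =>
        simp [Finset.piecewise_eq_of_notMem _ _ _ a.2, Matrix.one_apply, Subtype.ext_iff, Finset.piecewise, a.2]
  rw [this, Matrix.det_fromBlocks_zero₂₁, Matrix.det_one, mul_one, mdet]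

/-- Expansion of the char-like polynomial over subsets. -/
lemma det_X_smul_one_add {s : ℕ} (N : Matrix (Fin s) (Fin s) K) :
    ((X : K[X]) • (1 : Matrix (Fin s) (Fin s) K[X]) + N.map Polynomial.C).det
      = ∑ S : Finset (Fin s), X ^ (s - S.card) * Polynomial.C (mdet N S) := by
  classical
  set F : Fin s → Fin s → K[X] := fun i j => Polynomial.C (N i j) with hF
  set G : Fin s → Fin s → K[X] := fun i j => (X : K[X]) * (if i = j then 1 else 0) with hG
  have hmat : ((X : K[X]) • (1 : Matrix (Fin s) (Fin s) K[X]) + N.map Polynomial.C)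
      = Matrix.of (F + G) := by
    ext i j
    simp [hF, hG, Matrix.one_apply, add_comm, Matrix.map_apply]
  rw [hmat]
  have expand := Matrix.detRowAlternating.toMultilinearMap.map_add_univ F G
  simp only [AlternatingMap.coe_multilinearMap] at expand
  rw [show Matrix.det (Matrix.of (F + G)) = Matrix.detRowAlternating (F + G) from rfl, expand]
  refine Finset.sum_congr rfl fun S _ => ?_
  set m₀ : Fin s → Fin s → K[X] :=
    S.piecewise F (fun i j => if i = j then (1 : K[X]) else 0) with hm₀
  have hpw : S.piecewise F G = Sᶜ.piecewise (fun i => (X : K[X]) • m₀ i) m₀ := by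
    funext i
    by_cases hi : i ∈ S
    · rw [Finset.piecewise_eq_of_mem _ _ _ hi,
        Finset.piecewise_eq_of_notMem _ _ _ (by simp [hi]), hm₀,
        Finset.piecewise_eq_of_mem _ _ _ hi]
    · rw [Finset.piecewise_eq_of_notMem _ _ _ hi,
        Finset.piecewise_eq_of_mem _ _ _ (by simp [hi]), hm₀,
        Finset.piecewise_eq_of_notMem _ _ _ hi]
      funext j
      simp [hG]
  rw [hpw]
  have hsmul := Matrix.detRowAlternating.toMultilinearMap.map_piecewise_smul
    (fun _ : Fin s => (X : K[X])) m₀ Sᶜ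
  simp only [AlternatingMap.coe_multilinearMap] at hsmul
  rw [hsmul, Finset.prod_const, Finset.card_compl, Fintype.card_fin]
  have hm1 : m₀ = S.piecewise (N.map Polynomial.C) (1 : Matrix (Fin s) (Fin s) K[X]) := by
    funext i j
    by_cases hi : i ∈ S
    · rw [hm₀, Finset.piecewise_eq_of_mem _ _ _ hi]; simp [Finset.piecewise, hi, hF]
    · rw [hm₀, Finset.piecewise_eq_of_notMem _ _ _ hi]
      simp [Matrix.one_apply, Finset.piecewise, hi]
  have hdet : Matrix.detRowAlternating m₀ = Polynomial.C (mdet N S) := by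
    rw [show Matrix.detRowAlternating m₀ = Matrix.det (Matrix.of m₀) from rfl, hm1,
      det_piecewise_one, mdet, mdet, Matrix.submatrix_map, ← RingHom.mapMatrix_apply,
      ← RingHom.map_det]
  rw [hdet, smul_eq_mul]

lemma coeff_subset_sum {s : ℕ} (d : Finset (Fin s) → K) (k : ℕ) (hk : k ≤ s) :
    (∑ S : Finset (Fin s), X ^ (s - S.card) * Polynomial.C (d S)).coeff (s - k)
      = ∑ S ∈ Finset.powersetCard k Finset.univ, d S := by
  rw [Polynomial.finset_sum_coeff]
  have h : ∀ S : Finset (Fin s),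
      (X ^ (s - S.card) * Polynomial.C (d S)).coeff (s - k)
        = if S.card = k then d S else 0 := by
    intro S
    rw [mul_comm, Polynomial.coeff_C_mul, Polynomial.coeff_X_pow]
    have hcard : S.card ≤ s := by
      simpa using Finset.card_le_univ S
    by_cases hSk : S.card = k
    · simp [hSk]
    · have : ¬ (s - S.card = s - k) := by omega
      simp only [hSk, if_false]; rw [if_neg (by omega)]; simp
  simp_rw [h]
  rw [Finset.sum_ite, Finset.sum_const_zero, add_zero]
  rw [Finset.powersetCard_eq_filter, Finset.powerset_univ]

lemma coeff_range_sum (c : ℕ → K) (nn k : ℕ) (hk : k ≤ nn) :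
    (∑ i ∈ Finset.range (nn + 1), X ^ (nn - i) * Polynomial.C (c i)).coeff (nn - k) = c k := by
  rw [Polynomial.finset_sum_coeff]
  have h : ∀ i ∈ Finset.range (nn + 1),
      (X ^ (nn - i) * Polynomial.C (c i)).coeff (nn - k)
        = if i = k then c i else 0 := by
    intro i hi
    rw [Finset.mem_range] at hi
    rw [mul_comm, Polynomial.coeff_C_mul, Polynomial.coeff_X_pow]
    by_cases hik : i = k
    · simp [hik]
    · have : ¬ (nn - i = nn - k) := by omega
      simp only [hik, if_false]; rw [if_neg (by omega)]; simp
  rw [Finset.sum_congr rfl h, Finset.sum_ite_eq' _ k, if_pos (by simp; omega)]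

section counting
variable {α : Type*} [Fintype α] [DecidableEq α]

/-- any injection extends along another injection to a permutation -/
lemma exists_perm_comp_eq {f u : α → Fin m} (hf : Function.Injective f)
    (hu : Function.Injective u) : ∃ σ : Equiv.Perm (Fin m), ∀ a, σ (f a) = u a := by
  classical
  let T : Finset (Fin m) := Finset.univ.image f
  let U : Finset (Fin m) := Finset.univ.image u
  have hTcard : Fintype.card {x // x ∈ T} = Fintype.card α := by
    simp only [Fintype.card_coe, T]
    rw [Finset.card_image_of_injective _ hf, Finset.card_univ]
  have hUcard : Fintype.card {x // x ∈ U} = Fintype.card α := by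
    simp only [Fintype.card_coe, U]
    rw [Finset.card_image_of_injective _ hu, Finset.card_univ]
  let eT : α ≃ {x // x ∈ T} := Equiv.ofBijective
    (fun a => ⟨f a, Finset.mem_image_of_mem f (Finset.mem_univ a)⟩)
    (by
      rw [Fintype.bijective_iff_injective_and_card]
      exact ⟨fun a b hab => hf (Subtype.ext_iff.mp hab), hTcard.symm⟩)
  let eU : α ≃ {x // x ∈ U} := Equiv.ofBijective
    (fun a => ⟨u a, Finset.mem_image_of_mem u (Finset.mem_univ a)⟩)
    (by
      rw [Fintype.bijective_iff_injective_and_card]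
      exact ⟨fun a b hab => hu (Subtype.ext_iff.mp hab), hUcard.symm⟩)
  have hc : Fintype.card {x // ¬ x ∈ T} = Fintype.card {x // ¬ x ∈ U} := by
    rw [Fintype.card_subtype_compl, Fintype.card_subtype_compl, hTcard, hUcard]
  let c : {x // ¬ x ∈ T} ≃ {x // ¬ x ∈ U} := Fintype.equivOfCardEq hc
  refine ⟨((Equiv.sumCompl (· ∈ T)).symm.trans
    (((eT.symm.trans eU).sumCongr c).trans (Equiv.sumCompl (· ∈ U)))), fun a => ?_⟩
  have h1 : (Equiv.sumCompl (· ∈ T)).symm (f a)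
      = Sum.inl ⟨f a, Finset.mem_image_of_mem f (Finset.mem_univ a)⟩ :=
    Equiv.sumCompl_symm_apply_of_pos _
  have h2 : eT.symm ⟨f a, Finset.mem_image_of_mem f (Finset.mem_univ a)⟩ = a := by
    rw [Equiv.symm_apply_eq]; rfl
  simp only [Equiv.trans_apply, h1, Equiv.sumCongr_apply, Sum.map_inl, Equiv.trans_apply, h2]
  rfl

/-- the number of permutations pushing a fixed injection to a given injection -/
lemma card_fiber_perm {f u : α → Fin m} (hf : Function.Injective f)
    (hu : Function.Injective u) :
    (Finset.univ.filter (fun σ : Equiv.Perm (Fin m) => ∀ a, σ (f a) = u a)).card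
      = (m - Fintype.card α).factorial := by
  classical
  obtain ⟨σ₀, hσ₀⟩ := exists_perm_comp_eq hf hu
  let T : Finset (Fin m) := Finset.univ.image f
  -- bijection between the fiber and the stabilizer of T
  have hbij : (Finset.univ.filter (fun σ : Equiv.Perm (Fin m) => ∀ a, σ (f a) = u a)).card
      = (Finset.univ.filter (fun τ : Equiv.Perm (Fin m) => ∀ a, τ (f a) = f a)).card := by
    refine Finset.card_bij' (fun σ _ => σ₀⁻¹ * σ) (fun τ _ => σ₀ * τ) ?_ ?_ ?_ ?_
    · intro σ hσ
      simp only [Finset.mem_filter, Finset.mem_univ, true_and] at hσ ⊢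
      intro a
      simp [Equiv.Perm.mul_apply, hσ a, ← hσ₀ a]
    · intro τ hτ
      simp only [Finset.mem_filter, Finset.mem_univ, true_and] at hτ ⊢
      intro a
      simp [Equiv.Perm.mul_apply, hτ a, hσ₀ a]
    · intro σ _; simp [mul_assoc]
    · intro τ _; simp [mul_assoc]
  rw [hbij]
  -- stabilizer ≃ permutations of the complement
  have hcond : ∀ τ : Equiv.Perm (Fin m), (∀ a, τ (f a) = f a) ↔ (∀ x, ¬ ¬ x ∈ T → τ x = x) := by
    intro τ
    constructor
    · intro h x hx
      rw [not_not] at hx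
      obtain ⟨a, _, rfl⟩ := Finset.mem_image.mp hx
      exact h a
    · intro h a
      exact h (f a) (not_not.mpr (Finset.mem_image_of_mem f (Finset.mem_univ a)))
  have : (Finset.univ.filter (fun τ : Equiv.Perm (Fin m) => ∀ a, τ (f a) = f a)).card
      = Fintype.card {τ : Equiv.Perm (Fin m) // ∀ x, ¬ ¬ x ∈ T → τ x = x} := by
    rw [Fintype.card_subtype]
    congr 1
    exact Finset.filter_congr fun τ _ => by rw [hcond]
  rw [this, ← Fintype.card_congr (Equiv.Perm.subtypeEquivSubtypePerm (fun x => ¬ x ∈ T)),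
    Fintype.card_perm, Fintype.card_subtype_compl]
  have h5 : Fintype.card {x : Fin m // x ∈ T} = Fintype.card α := by
    rw [show Fintype.card {x : Fin m // x ∈ T} = T.card from Fintype.card_coe T,
      Finset.card_image_of_injective _ hf, Finset.card_univ]
  rw [h5, Fintype.card_fin]

/-- Summing a function of `σ ∘ f` over all permutations. -/
lemma sum_perm_comp (h : (α → Fin m) → K) {f : α → Fin m} (hf : Function.Injective f) :
    ∑ σ : Equiv.Perm (Fin m), h (fun a => σ (f a))
      = (m - Fintype.card α).factorial *
        ∑ u ∈ Finset.univ.filter (fun u : α → Fin m => Function.Injective u), h u := by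
  classical
  rw [← Finset.sum_fiberwise_of_maps_to (g := fun (σ : Equiv.Perm (Fin m)) => fun a => σ (f a))
    (t := Finset.univ.filter (fun u : α → Fin m => Function.Injective u))
    (fun σ _ => by
      simp only [Finset.mem_filter, Finset.mem_univ, true_and]
      exact fun a b hab => hf (σ.injective hab))]
  rw [Finset.mul_sum]
  refine Finset.sum_congr rfl fun u hu => ?_
  rw [Finset.mem_filter] at hu
  have : ∀ σ ∈ Finset.univ.filter
      (fun σ : Equiv.Perm (Fin m) => (fun a => σ (f a)) = u), h (fun a => σ (f a)) = h u := by
    intro σ hσ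
    rw [Finset.mem_filter] at hσ
    rw [hσ.2]
  rw [Finset.sum_congr rfl this, Finset.sum_const, nsmul_eq_mul]
  congr 1
  have : (Finset.univ.filter (fun σ : Equiv.Perm (Fin m) => (fun a => σ (f a)) = u))
      = (Finset.univ.filter (fun σ : Equiv.Perm (Fin m) => ∀ a, σ (f a) = u a)) :=
    Finset.filter_congr fun σ _ => by rw [funext_iff]
  rw [this, card_fiber_perm hf hu.2]

/-- Summing determinant-like invariant functions over injections grouped by image. -/
lemma sum_inj_eq_factorial_sum {s : ℕ} (A : Matrix (Fin s) (Fin s) K) :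
    ∑ u ∈ Finset.univ.filter (fun u : α → Fin s => Function.Injective u),
        (A.submatrix u u).det
      = (Fintype.card α).factorial *
        ∑ T ∈ Finset.powersetCard (Fintype.card α) Finset.univ, mdet A T := by
  classical
  rw [← Finset.sum_fiberwise_of_maps_to
    (g := fun (u : α → Fin s) => Finset.univ.image u)
    (t := Finset.powersetCard (Fintype.card α) Finset.univ)
    (fun u hu => by
      rw [Finset.mem_filter] at hu
      rw [Finset.mem_powersetCard]
      exact ⟨Finset.subset_univ _,
        by rw [Finset.card_image_of_injective _ hu.2, Finset.card_univ]⟩)]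
  rw [Finset.mul_sum]
  refine Finset.sum_congr rfl fun T hT => ?_
  rw [Finset.mem_powersetCard] at hT
  have hdet : ∀ u ∈ (Finset.univ.filter (fun u : α → Fin s => Function.Injective u)).filter
      (fun u => Finset.univ.image u = T), (A.submatrix u u).det = mdet A T := by
    intro u hu
    simp only [Finset.mem_filter, Finset.mem_univ, true_and] at hu
    obtain ⟨huinj, huim⟩ := hu
    have hmem : ∀ a, u a ∈ T := fun a => huim ▸ Finset.mem_image_of_mem u (Finset.mem_univ a)
    let e : α ≃ {x // x ∈ T} := Equiv.ofBijective (fun a => ⟨u a, hmem a⟩)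
      (by
        rw [Fintype.bijective_iff_injective_and_card]
        constructor
        · exact fun a b hab => huinj (Subtype.ext_iff.mp hab)
        · rw [show Fintype.card {x : Fin s // x ∈ T} = T.card from Fintype.card_coe T, hT.2])
    have : A.submatrix u u = (A.submatrix (fun i : {x // x ∈ T} => (i : Fin s))
        (fun i : {x // x ∈ T} => (i : Fin s))).submatrix e e := by
      ext a b; rfl
    rw [this, Matrix.det_submatrix_equiv_self]; rfl
  rw [Finset.sum_congr rfl hdet, Finset.sum_const, nsmul_eq_mul]
  congr 1
  -- the number of injections with image T is (card α)!
  have hcardT : Fintype.card {x : Fin s // x ∈ T} = Fintype.card α := by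
    rw [show Fintype.card {x : Fin s // x ∈ T} = T.card from Fintype.card_coe T, hT.2]
  rw [← Fintype.card_equiv (α := α) (β := {x // x ∈ T}) (Fintype.equivOfCardEq hcardT.symm)]
  rw [Fintype.card, Finset.card_bij'
    (i := fun (u : α → Fin s)
      (hu : u ∈ (Finset.univ.filter (fun u : α → Fin s => Function.Injective u)).filter
        (fun u => Finset.univ.image u = T)) => Equiv.ofBijective
          (fun a => (⟨u a, by
            simp only [Finset.mem_filter, Finset.mem_univ, true_and] at hu
            exact hu.2 ▸ Finset.mem_image_of_mem u (Finset.mem_univ a)⟩ : {x // x ∈ T}))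
          (by
            simp only [Finset.mem_filter, Finset.mem_univ, true_and] at hu
            rw [Fintype.bijective_iff_injective_and_card]
            exact ⟨fun a b hab => hu.1 (Subtype.ext_iff.mp hab),
              (by rw [show Fintype.card {x : Fin s // x ∈ T} = T.card from
                Fintype.card_coe T, hT.2])⟩))
    (j := fun (e : α ≃ {x // x ∈ T}) _ => fun a => ((e a : {x // x ∈ T}) : Fin s))
    ?_ ?_ ?_ ?_]
  · intro u hu
    exact Finset.mem_univ _
  · intro e he
    simp only [Finset.mem_filter, Finset.mem_univ, true_and]
    constructor
    · intro a b hab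
      exact e.injective (Subtype.ext hab)
    · apply Finset.eq_of_subset_of_card_le
      · intro x hx
        obtain ⟨a, _, rfl⟩ := Finset.mem_image.mp hx
        exact (e a).2
      · rw [hT.2, Finset.card_image_of_injective _ (fun a b hab => e.injective (Subtype.ext hab)),
          Finset.card_univ]
  · intro u hu; rfl
  · intro e he
    ext a
    simp [Equiv.ofBijective]
end counting

lemma sum_sign_prod (T1 T2 : Finset (Fin m)) :
    ∑ ε : Fin m → Bool, (∏ j ∈ T1, (if ε j then (1:K) else -1)) *
        (∏ j ∈ T2, (if ε j then (1:K) else -1))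
      = if T1 = T2 then (2^m : K) else 0 := by
  classical
  have key : ∀ ε : Fin m → Bool, (∏ j ∈ T1, (if ε j then (1:K) else -1)) *
      (∏ j ∈ T2, (if ε j then (1:K) else -1))
      = ∏ j : Fin m, ((if j ∈ T1 then (if ε j then (1:K) else -1) else 1) *
          (if j ∈ T2 then (if ε j then (1:K) else -1) else 1)) := by
    intro ε
    rw [Finset.prod_mul_distrib]
    congr 1 <;> rw [Finset.prod_ite_mem, Finset.univ_inter]
  simp_rw [key]
  rw [← Fintype.prod_sum
    (fun (j : Fin m) (b : Bool) => (if j ∈ T1 then (if b then (1:K) else -1) else 1) *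
          (if j ∈ T2 then (if b then (1:K) else -1) else 1))]
  have inner : ∀ j : Fin m, (∑ b : Bool, (if j ∈ T1 then (if b then (1:K) else -1) else 1) *
      (if j ∈ T2 then (if b then (1:K) else -1) else 1))
      = if ((j ∈ T1) ↔ (j ∈ T2)) then 2 else 0 := by
    intro j
    rw [Fintype.sum_bool]
    by_cases h1 : j ∈ T1 <;> by_cases h2 : j ∈ T2 <;> simp [h1, h2] <;> ring
  rw [Finset.prod_congr rfl (fun j _ => inner j)]
  by_cases h : T1 = T2
  · subst h
    simp [Finset.prod_const, Finset.card_univ]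
  · rw [if_neg h]
    obtain ⟨j, hj⟩ : ∃ j, ¬ ((j ∈ T1) ↔ (j ∈ T2)) := by
      by_contra hall
      push_neg at hall
      exact h (Finset.ext fun j => hall j)
    exact Finset.prod_eq_zero (Finset.mem_univ j) (by rw [if_neg hj])

lemma signMatrix_mul_self (ε : Fin m → Bool) :
    signMatrix K ε * signMatrix K ε = 1 := by
  rw [signMatrix, Matrix.diagonal_mul_diagonal]
  rw [show (fun i => (if ε i then (1:K) else -1) * (if ε i then 1 else -1)) = fun _ => 1 from
    funext fun i => by by_cases h : ε i <;> simp [h]]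
  exact Matrix.diagonal_one

lemma permMatrix_mul_permMatrix_inv (σ : Equiv.Perm (Fin m)) :
    (σ.permMatrix K) * ((σ⁻¹).permMatrix K) = 1 := by
  rw [Equiv.Perm.permMatrix, Equiv.Perm.permMatrix, ← PEquiv.toMatrix_trans,
    ← Equiv.toPEquiv_trans]
  rw [show σ.trans σ⁻¹ = Equiv.refl (Fin m) from Equiv.self_trans_symm σ]
  rw [Equiv.toPEquiv_refl, PEquiv.toMatrix_refl]

lemma signPerm_inv (ε : Fin m → Bool) (σ : Equiv.Perm (Fin m)) :
    (signMatrix K ε * σ.permMatrix K)⁻¹ = (σ⁻¹).permMatrix K * signMatrix K ε := by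
  apply Matrix.inv_eq_right_inv
  calc signMatrix K ε * σ.permMatrix K * ((σ⁻¹).permMatrix K * signMatrix K ε)
      = signMatrix K ε * (σ.permMatrix K * (σ⁻¹).permMatrix K) * signMatrix K ε := by
        noncomm_ring
    _ = 1 := by rw [permMatrix_mul_permMatrix_inv, mul_one, signMatrix_mul_self]

lemma conj_entry (A : Matrix (Fin m) (Fin m) K) (ε : Fin m → Bool) (σ : Equiv.Perm (Fin m)) :
    (signMatrix K ε * σ.permMatrix K) * A * (signMatrix K ε * σ.permMatrix K)⁻¹
      = Matrix.of (fun a b => (if ε a then (1:K) else -1) * A (σ a) (σ b) *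
          (if ε b then (1:K) else -1)) := by
  rw [signPerm_inv]
  have h1 : σ.permMatrix K * A = A.submatrix σ id := PEquiv.toMatrix_toPEquiv_mul σ A
  have h2 : A.submatrix σ id * (σ⁻¹).permMatrix K = (A.submatrix σ id).submatrix id σ := by
    have := PEquiv.mul_toMatrix_toPEquiv (A.submatrix σ id) (σ⁻¹)
    rwa [show (σ⁻¹).symm = σ from rfl] at this
  calc signMatrix K ε * σ.permMatrix K * A * ((σ⁻¹).permMatrix K * signMatrix K ε)
      = signMatrix K ε * ((σ.permMatrix K * A) * (σ⁻¹).permMatrix K) * signMatrix K ε := by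
        noncomm_ring
    _ = signMatrix K ε * ((A.submatrix σ id).submatrix id σ) * signMatrix K ε := by
        rw [h1, h2]
    _ = _ := by
        ext a b
        rw [signMatrix, Matrix.of_apply, Matrix.mul_diagonal, Matrix.diagonal_mul]
        simp [mul_comm, mul_assoc, mul_left_comm]

lemma submatrix_mul_split {α β : Type*} {ι : Type*} [Fintype ι]
    {p q : Type*} (M : Matrix p ι K) (N : Matrix ι q K) (f : α → p) (g : β → q) :
    (M * N).submatrix f g = M.submatrix f id * N.submatrix id g := by
  ext a b; simp [Matrix.mul_apply]

lemma det_expand_perm {α : Type*} [Fintype α] [DecidableEq α] (M : Matrix α α K) :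
    ∑ π : Equiv.Perm α, (Equiv.Perm.sign π : ℤ) * ∏ i, M i (π i) = M.det := by
  rw [Matrix.det_apply']
  refine Fintype.sum_equiv (Equiv.inv (Equiv.Perm α)) _ _ fun π => ?_
  simp only [Equiv.inv_apply]
  rw [Equiv.Perm.sign_inv]
  congr 1
  show ∏ i, M i (π i) = ∏ i, M (π⁻¹ i) i
  calc ∏ i, M i (π i) = ∏ i, M (π⁻¹ (π i)) (π i) := by simp
    _ = ∏ i, M (π⁻¹ i) i := Equiv.prod_comp π fun i => M (π⁻¹ i) i

lemma sum_filter_image_eq {α : Type*} [Fintype α] [DecidableEq α] {f : α → Fin m}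
    (hf : Function.Injective f) (H : (α → Fin m) → K) :
    ∑ g ∈ (Finset.univ.filter (fun g : α → Fin m => Function.Injective g)).filter
        (fun g => Finset.univ.image g = Finset.univ.image f), H g
      = ∑ π : Equiv.Perm α, H (f ∘ π) := by
  classical
  refine (Finset.sum_bij (fun (π : Equiv.Perm α) _ => f ∘ π) ?_ ?_ ?_ ?_).symm
  · intro π _
    simp only [Finset.mem_filter, Finset.mem_univ, true_and]
    refine ⟨hf.comp π.injective, ?_⟩
    rw [show Finset.univ.image (f ∘ π) = (Finset.univ.image π).image f from
      (Finset.image_image ..).symm]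
    congr 1
    exact Finset.image_univ_equiv π
  · intro π₁ _ π₂ _ h
    ext a
    exact hf (congrFun h a)
  · intro g hg
    simp only [Finset.mem_filter, Finset.mem_univ, true_and] at hg
    obtain ⟨hginj, hgim⟩ := hg
    have hrange : ∀ a, ∃ b, f b = g a := by
      intro a
      have : g a ∈ Finset.univ.image f := by
        rw [← hgim]; exact Finset.mem_image_of_mem g (Finset.mem_univ a)
      obtain ⟨b, _, hb⟩ := Finset.mem_image.mp this
      exact ⟨b, hb⟩
    choose π hπ using hrange
    have hπinj : Function.Injective π := fun a b hab => by
      apply hginj; rw [← hπ a, ← hπ b, hab]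
    refine ⟨Equiv.ofBijective π (Finite.injective_iff_bijective.mp hπinj), Finset.mem_univ _, ?_⟩
    funext a
    exact hπ a
  · intro π _; rfl

lemma det_BWC (B : Matrix (Fin n) (Fin m) K) (C : Matrix (Fin m) (Fin n) K)
    (W : Matrix (Fin m) (Fin m) K) (S : Finset (Fin n)) :
    ((B * W * C).submatrix (fun i : {x // x ∈ S} => (i : Fin n))
        (fun i : {x // x ∈ S} => (i : Fin n))).det
      = ∑ f ∈ Finset.univ.filter (fun f : {x // x ∈ S} → Fin m => Function.Injective f),
          ∑ g ∈ Finset.univ.filter (fun g : {x // x ∈ S} → Fin m => Function.Injective g),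
            (∏ i : {x // x ∈ S}, B (i : Fin n) (f i)) * ((∏ i : {x // x ∈ S}, W (f i) (g i)) *
              (C.submatrix g (fun i : {x // x ∈ S} => (i : Fin n))).det) := by
  classical
  set vS := fun i : {x // x ∈ S} => (i : Fin n) with hvS
  rw [Matrix.mul_assoc, submatrix_mul_split, det_mul_eq_sum_inj]
  refine Finset.sum_congr rfl fun f hf => ?_
  have h2 : ((W * C).submatrix id vS).submatrix f id
      = (W.submatrix f id) * (C.submatrix id vS) := by
    ext a b; simp [Matrix.mul_apply]
  rw [h2, det_mul_eq_sum_inj, Finset.mul_sum]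
  refine Finset.sum_congr rfl fun g hg => ?_
  have h3 : ((C.submatrix id vS).submatrix g id) = C.submatrix g vS := rfl
  rw [h3]
  simp only [Matrix.submatrix_apply, id]
  rfl

lemma key_sum (A : Matrix (Fin m) (Fin m) K) (B : Matrix (Fin n) (Fin m) K)
    (C : Matrix (Fin m) (Fin n) K) (k : ℕ) :
    ∑ σ : Equiv.Perm (Fin m), ∑ ε : Fin m → Bool,
        msum (B * (signMatrix K ε * σ.permMatrix K) * A *
          (signMatrix K ε * σ.permMatrix K)⁻¹ * C) k
      = (2^m : K) * ((m - k).factorial : K) * (k.factorial : K) * msum A k * msum (B * C) k := by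
  classical
  -- notation
  simp only [msum]
  -- swap the subset sum outside
  have hswap1 : ∀ σ : Equiv.Perm (Fin m), (∑ ε : Fin m → Bool,
        ∑ S ∈ Finset.powersetCard k Finset.univ,
          mdet (B * (signMatrix K ε * σ.permMatrix K) * A *
            (signMatrix K ε * σ.permMatrix K)⁻¹ * C) S)
      = ∑ S ∈ Finset.powersetCard k Finset.univ, ∑ ε : Fin m → Bool,
          mdet (B * (signMatrix K ε * σ.permMatrix K) * A *
            (signMatrix K ε * σ.permMatrix K)⁻¹ * C) S := fun σ => Finset.sum_comm
  simp only [hswap1]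
  rw [Finset.sum_comm]
  have main : ∀ S ∈ Finset.powersetCard k Finset.univ,
      (∑ σ : Equiv.Perm (Fin m), ∑ ε : Fin m → Bool,
        mdet (B * (signMatrix K ε * σ.permMatrix K) * A *
            (signMatrix K ε * σ.permMatrix K)⁻¹ * C) S)
      = ((2^m : K) * ((m - k).factorial : K) * ((k.factorial : K) *
          (∑ T ∈ Finset.powersetCard k Finset.univ, mdet A T))) *
        ∑ f ∈ Finset.univ.filter (fun f : {x // x ∈ S} → Fin m => Function.Injective f),
          (∏ i : {x // x ∈ S}, B (i : Fin n) (f i)) *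
            (C.submatrix f (fun i : {x // x ∈ S} => (i : Fin n))).det := by
    intro S hS
    have hcard : Fintype.card {x // x ∈ S} = k := by
      rw [Fintype.card_coe]
      exact (Finset.mem_powersetCard.mp hS).2
    set vS := fun i : {x // x ∈ S} => (i : Fin n) with hvS
    set injF := Finset.univ.filter
      (fun f : {x // x ∈ S} → Fin m => Function.Injective f) with hinjF
    -- Step 1: the ε-sum for a fixed σ
    have step1 : ∀ σ : Equiv.Perm (Fin m),
        (∑ ε : Fin m → Bool, mdet (B * (signMatrix K ε * σ.permMatrix K) * A *
            (signMatrix K ε * σ.permMatrix K)⁻¹ * C) S)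
        = ∑ f ∈ injF, ((2^m : K) * (∏ i : {x // x ∈ S}, B (i : Fin n) (f i)) *
            (C.submatrix f vS).det) *
            (A.submatrix (fun a => σ (f a)) (fun a => σ (f a))).det := by
      intro σ
      have hrw : ∀ ε : Fin m → Bool,
          mdet (B * (signMatrix K ε * σ.permMatrix K) * A *
            (signMatrix K ε * σ.permMatrix K)⁻¹ * C) S
          = ∑ f ∈ injF, ∑ g ∈ injF,
              (∏ i : {x // x ∈ S}, B (i : Fin n) (f i)) *
              ((∏ i : {x // x ∈ S}, ((if ε (f i) then (1:K) else -1) *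
                  A (σ (f i)) (σ (g i)) * (if ε (g i) then (1:K) else -1))) *
                (C.submatrix g vS).det) := by
        intro ε
        have hW : B * (signMatrix K ε * σ.permMatrix K) * A *
            (signMatrix K ε * σ.permMatrix K)⁻¹ * C
            = B * (Matrix.of (fun a b => (if ε a then (1:K) else -1) * A (σ a) (σ b) *
                (if ε b then (1:K) else -1))) * C := by
          rw [← conj_entry A ε σ]
          simp only [Matrix.mul_assoc]
        rw [hW, mdet, det_BWC]
        rfl
      simp only [hrw]
      -- swap ε-sum inside
      rw [Finset.sum_comm]
      refine Finset.sum_congr rfl fun f hf => ?_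
      rw [Finset.sum_comm]
      have hfinj : Function.Injective f := (Finset.mem_filter.mp hf).2
      -- compute the ε-average for each g
      have hg1 : ∀ g ∈ injF,
          (∑ ε : Fin m → Bool, (∏ i : {x // x ∈ S}, B (i : Fin n) (f i)) *
              ((∏ i : {x // x ∈ S}, ((if ε (f i) then (1:K) else -1) *
                  A (σ (f i)) (σ (g i)) * (if ε (g i) then (1:K) else -1))) *
                (C.submatrix g vS).det))
          = (if Finset.univ.image g = Finset.univ.image f then (2^m : K) else 0) *
              ((∏ i : {x // x ∈ S}, B (i : Fin n) (f i)) *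
                (∏ i : {x // x ∈ S}, A (σ (f i)) (σ (g i))) *
                (C.submatrix g vS).det) := by
        intro g hg
        have hginj : Function.Injective g := (Finset.mem_filter.mp hg).2
        have hprod : ∀ ε : Fin m → Bool,
            (∏ i : {x // x ∈ S}, ((if ε (f i) then (1:K) else -1) *
                A (σ (f i)) (σ (g i)) * (if ε (g i) then (1:K) else -1)))
            = ((∏ j ∈ Finset.univ.image g, (if ε j then (1:K) else -1)) *
                (∏ j ∈ Finset.univ.image f, (if ε j then (1:K) else -1))) *
              (∏ i : {x // x ∈ S}, A (σ (f i)) (σ (g i))) := by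
          intro ε
          rw [Finset.prod_image (fun x _ y _ h => hginj h),
            Finset.prod_image (fun x _ y _ h => hfinj h)]
          rw [← Finset.prod_mul_distrib, ← Finset.prod_mul_distrib]
          exact Finset.prod_congr rfl fun i _ => by ring
        simp only [hprod]
        rw [show (∑ ε : Fin m → Bool, (∏ i : {x // x ∈ S}, B (i : Fin n) (f i)) *
            ((((∏ j ∈ Finset.univ.image g, (if ε j then (1:K) else -1)) *
                (∏ j ∈ Finset.univ.image f, (if ε j then (1:K) else -1))) *
              (∏ i : {x // x ∈ S}, A (σ (f i)) (σ (g i)))) *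
                (C.submatrix g vS).det))
            = (∑ ε : Fin m → Bool, (∏ j ∈ Finset.univ.image g, (if ε j then (1:K) else -1)) *
                (∏ j ∈ Finset.univ.image f, (if ε j then (1:K) else -1))) *
              ((∏ i : {x // x ∈ S}, B (i : Fin n) (f i)) *
                (∏ i : {x // x ∈ S}, A (σ (f i)) (σ (g i))) *
                (C.submatrix g vS).det) from by
          rw [Finset.sum_mul]
          exact Finset.sum_congr rfl fun ε _ => by ring]
        rw [sum_sign_prod]
      rw [Finset.sum_congr rfl hg1]
      -- only g with the same image as f survive
      rw [show (∑ g ∈ injF,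
          (if Finset.univ.image g = Finset.univ.image f then (2^m : K) else 0) *
              ((∏ i : {x // x ∈ S}, B (i : Fin n) (f i)) *
                (∏ i : {x // x ∈ S}, A (σ (f i)) (σ (g i))) *
                (C.submatrix g vS).det))
          = ∑ g ∈ injF.filter (fun g => Finset.univ.image g = Finset.univ.image f),
              (2^m : K) * ((∏ i : {x // x ∈ S}, B (i : Fin n) (f i)) *
                (∏ i : {x // x ∈ S}, A (σ (f i)) (σ (g i))) *
                (C.submatrix g vS).det) from by
        rw [eq_comm, Finset.sum_filter]
        exact Finset.sum_congr rfl fun g _ => by rw [ite_mul, zero_mul]]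
      rw [hinjF, sum_filter_image_eq hfinj]
      -- reparametrize by permutations of S
      have hterm : ∀ π : Equiv.Perm {x // x ∈ S},
          (2^m : K) * ((∏ i : {x // x ∈ S}, B (i : Fin n) (f i)) *
            (∏ i : {x // x ∈ S}, A (σ (f i)) (σ ((f ∘ π) i))) *
            (C.submatrix (f ∘ π) vS).det)
          = ((2^m : K) * (∏ i : {x // x ∈ S}, B (i : Fin n) (f i)) *
              (C.submatrix f vS).det) *
            ((Equiv.Perm.sign π : ℤ) *
              ∏ i : {x // x ∈ S},
                (A.submatrix (fun a => σ (f a)) (fun a => σ (f a))) i (π i)) := by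
        intro π
        have hCsub : C.submatrix (f ∘ π) vS = (C.submatrix f vS).submatrix π id := rfl
        rw [hCsub, Matrix.det_permute]
        have : ∀ i : {x // x ∈ S}, A (σ (f i)) (σ ((f ∘ π) i))
            = (A.submatrix (fun a => σ (f a)) (fun a => σ (f a))) i (π i) := fun i => rfl
        simp only [this]
        push_cast
        ring
      rw [Finset.sum_congr rfl fun π _ => hterm π, ← Finset.mul_sum, det_expand_perm]
    simp only [step1]
    -- Step 2: sum over σ
    rw [Finset.sum_comm]
    have step2 : ∀ f ∈ injF,
        (∑ σ : Equiv.Perm (Fin m), ((2^m : K) * (∏ i : {x // x ∈ S}, B (i : Fin n) (f i)) *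
            (C.submatrix f vS).det) *
            (A.submatrix (fun a => σ (f a)) (fun a => σ (f a))).det)
        = ((2^m : K) * (∏ i : {x // x ∈ S}, B (i : Fin n) (f i)) *
            (C.submatrix f vS).det) *
          (((m - k).factorial : K) * ((k.factorial : K) *
            (∑ T ∈ Finset.powersetCard k Finset.univ, mdet A T))) := by
      intro f hf
      have hfinj : Function.Injective f := (Finset.mem_filter.mp hf).2
      rw [← Finset.mul_sum]
      congr 1
      rw [sum_perm_comp (fun u => (A.submatrix u u).det) hfinj,
        sum_inj_eq_factorial_sum, hcard]
    rw [Finset.sum_congr rfl step2, ← Finset.sum_mul]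
    rw [show (∑ f ∈ injF, (2^m : K) * (∏ i : {x // x ∈ S}, B (i : Fin n) (f i)) *
        (C.submatrix f vS).det)
        = (2^m : K) * ∑ f ∈ injF, (∏ i : {x // x ∈ S}, B (i : Fin n) (f i)) *
            (C.submatrix f vS).det from by
      rw [Finset.mul_sum]
      exact Finset.sum_congr rfl fun f _ => by ring]
    ring
  rw [Finset.sum_congr rfl main, ← Finset.mul_sum]
  have last : ∀ S ∈ Finset.powersetCard k Finset.univ,
      (∑ f ∈ Finset.univ.filter (fun f : {x // x ∈ S} → Fin m => Function.Injective f),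
          (∏ i : {x // x ∈ S}, B (i : Fin n) (f i)) *
            (C.submatrix f (fun i : {x // x ∈ S} => (i : Fin n))).det)
      = mdet (B * C) S := by
    intro S _
    rw [mdet, submatrix_mul_split, det_mul_eq_sum_inj]
    rfl
  rw [Finset.sum_congr rfl last]
  ring
end aux

theorem coeff_sum_det_conj_mul
    {K : Type*} [CommRing K] {m n : ℕ}
    (A : Matrix (Fin m) (Fin m) K) (B : Matrix (Fin n) (Fin m) K)
    (C : Matrix (Fin m) (Fin n) K) (p q r : ℕ → K)
    (hp : ((X : K[X]) • (1 : Matrix (Fin n) (Fin n) K[X]) + (B * C).map Polynomial.C).det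
        = ∑ i ∈ Finset.range (n + 1), X ^ (n - i) * Polynomial.C (p i))
    (hq : ((X : K[X]) • (1 : Matrix (Fin m) (Fin m) K[X]) + A.map Polynomial.C).det
        = ∑ i ∈ Finset.range (m + 1), X ^ (m - i) * Polynomial.C (q i))
    (hr : (∑ σ : Equiv.Perm (Fin m), ∑ ε : Fin m → Bool,
          ((X : K[X]) • (1 : Matrix (Fin n) (Fin n) K[X]) +
            (B * (signMatrix K ε * σ.permMatrix K) * A *
              (signMatrix K ε * σ.permMatrix K)⁻¹ * C).map Polynomial.C).det)
        = ∑ i ∈ Finset.range (n + 1), X ^ (n - i) * Polynomial.C (r i)) :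
    ∀ k, k ≤ n → k ≤ m →
      r k = (2 ^ m * k.factorial * (m - k).factorial : ℕ) * p k * q k := by
  intro k hk hkm
  have hpk : p k = msum (B * C) k := by
    have h := congrArg (fun P : K[X] => P.coeff (n - k)) hp
    rw [det_X_smul_one_add, coeff_subset_sum _ k hk, coeff_range_sum p n k hk] at h
    rw [← h, msum]
  have hqk : q k = msum A k := by
    have h := congrArg (fun P : K[X] => P.coeff (m - k)) hq
    rw [det_X_smul_one_add, coeff_subset_sum _ k hkm, coeff_range_sum q m k hkm] at h
    rw [← h, msum]
  have hrk : r k = ∑ σ : Equiv.Perm (Fin m), ∑ ε : Fin m → Bool,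
      msum (B * (signMatrix K ε * σ.permMatrix K) * A *
        (signMatrix K ε * σ.permMatrix K)⁻¹ * C) k := by
    have h := congrArg (fun P : K[X] => P.coeff (n - k)) hr
    rw [coeff_range_sum r n k hk] at h
    rw [← h, Polynomial.finset_sum_coeff]
    refine Finset.sum_congr rfl fun σ _ => ?_
    rw [Polynomial.finset_sum_coeff]
    refine Finset.sum_congr rfl fun ε _ => ?_
    rw [det_X_smul_one_add, coeff_subset_sum _ k hk, msum]
  rw [hrk, hpk, hqk, key_sum A B C k]
  push_cast
  ring
end

section
/- Let K be a commutative ring, A an m×m matrix over K, B an n×m matrix and C an m×n matrix over K, and let 0 ≤ k ≤ min(n, m). Then Σ_{P ∈ P_m} Σ_{Q ∈ Q_m} [B·Q·P·A·P^{-1}·Q·C]^{(k)} = 2^m · k! · (m−k)! · [B·C]^{(k)} · [A]^{(k)}, where 2^m, k! and (m−k)! denote the images of these natural numbers in K. -/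
set_option maxHeartbeats 1000000


/-- `[A]^(k)`: the sum of all principal `k × k` minors of `A`. -/
noncomputable def principalMinorSum {K : Type*} [CommRing K] {n : ℕ}
    (A : Matrix (Fin n) (Fin n) K) (k : ℕ) : K :=
  ∑ S : {s : Finset (Fin n) // s.card = k},
    (A.submatrix (S.1.orderEmbOfFin S.2) (S.1.orderEmbOfFin S.2)).det

open Finset in
lemma det_mul_expand {K : Type*} [CommRing K] {k m : ℕ}
    (M : Matrix (Fin k) (Fin m) K) (N : Matrix (Fin m) (Fin k) K) :
    (M * N).det = ∑ p : Fin k → Fin m, (M.submatrix id p).det * ∏ i, N (p i) i := by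
  have h1 : ∀ σ : Equiv.Perm (Fin k),
      ∏ i, (M * N) (σ i) i = ∑ p : Fin k → Fin m, ∏ i, (M (σ i) (p i) * N (p i) i) := by
    intro σ
    simp only [Matrix.mul_apply]
    rw [Finset.prod_univ_sum]
    rw [Fintype.piFinset_univ]
  rw [Matrix.det_apply']
  simp only [h1, Finset.mul_sum]
  rw [Finset.sum_comm]
  refine Finset.sum_congr rfl fun p _ => ?_
  rw [Matrix.det_apply', Finset.sum_mul]
  refine Finset.sum_congr rfl fun σ _ => ?_
  rw [Finset.prod_mul_distrib]
  simp only [Matrix.submatrix_apply, id]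
  ring

lemma det_submatrix_of_not_injective {K : Type*} [CommRing K] {k n m : ℕ}
    (X : Matrix (Fin n) (Fin m) K) (e : Fin k → Fin n) (p : Fin k → Fin m)
    (hp : ¬ Function.Injective p) : (X.submatrix e p).det = 0 := by
  obtain ⟨i, j, hij, hne⟩ := Function.not_injective_iff.mp hp
  exact Matrix.det_zero_of_column_eq hne (fun r => by simp [Matrix.submatrix_apply, hij])

lemma image_orderEmbOfFin {m k : ℕ} (T : Finset (Fin m)) (hT : T.card = k) :
    Finset.image (T.orderEmbOfFin hT) Finset.univ = T := by
  ext x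
  simp only [Finset.mem_image, Finset.mem_univ, true_and]
  constructor
  · rintro ⟨i, rfl⟩; exact Finset.orderEmbOfFin_mem T hT i
  · intro hx
    exact ⟨(T.orderIsoOfFin hT).symm ⟨x, hx⟩, by
      rw [← Finset.coe_orderIsoOfFin_apply, (T.orderIsoOfFin hT).apply_symm_apply]⟩

lemma exists_perm_factor {k m : ℕ} {p : Fin k → Fin m} (hp : Function.Injective p) :
    ∃ (T : Finset (Fin m)) (hT : T.card = k) (ρ : Equiv.Perm (Fin k)),
      p = (T.orderEmbOfFin hT) ∘ ρ := by
  set T := Finset.image p Finset.univ with hTdef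
  have hT : T.card = k := by
    rw [hTdef, Finset.card_image_of_injective _ hp, Finset.card_univ, Fintype.card_fin]
  have hmem : ∀ j, p j ∈ T := fun j => Finset.mem_image_of_mem p (Finset.mem_univ j)
  set g : Fin k → Fin k := fun j => (T.orderIsoOfFin hT).symm ⟨p j, hmem j⟩ with hg
  have hge : ∀ j, (T.orderEmbOfFin hT) (g j) = p j := by
    intro j
    rw [hg, ← Finset.coe_orderIsoOfFin_apply, (T.orderIsoOfFin hT).apply_symm_apply]
  have hginj : Function.Injective g := by
    intro a b hab
    apply hp
    rw [← hge a, ← hge b, hab]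
  refine ⟨T, hT, Equiv.ofBijective g (Finite.injective_iff_bijective.mp hginj), ?_⟩
  funext j
  simp [Equiv.ofBijective, hge j]
lemma sum_inj_group {K : Type*} [AddCommMonoid K] {k m : ℕ}
    (F : (Fin k → Fin m) → K) (hF : ∀ p, ¬ Function.Injective p → F p = 0) :
    ∑ p : Fin k → Fin m, F p
      = ∑ T : {s : Finset (Fin m) // s.card = k}, ∑ ρ : Equiv.Perm (Fin k),
          F ((T.1.orderEmbOfFin T.2) ∘ ρ) := by
  classical
  have key : ∑ p ∈ Finset.univ.filter (fun q : Fin k → Fin m => Function.Injective q), F p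
      = ∑ p, F p :=
    Finset.sum_filter_of_ne (fun p _ h => by by_contra hc; exact h (hF p hc))
  rw [← key]
  rw [← Finset.sum_product']
  refine (Finset.sum_bij (fun (x : {s : Finset (Fin m) // s.card = k} × Equiv.Perm (Fin k)) _ => (x.1.1.orderEmbOfFin x.1.2) ∘ ⇑x.2) ?_ ?_ ?_ ?_).symm
  · intro x _
    simp only [Finset.mem_filter, Finset.mem_univ, true_and]
    exact (Finset.orderEmbOfFin x.1.1 x.1.2).injective.comp x.2.injective
  · intro x _ y _ h
    have himx : Finset.image ((x.1.1.orderEmbOfFin x.1.2) ∘ ⇑x.2) Finset.univ = x.1.1 := by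
      rw [← Finset.image_image, Finset.image_univ_equiv, image_orderEmbOfFin]
    have himy : Finset.image ((y.1.1.orderEmbOfFin y.1.2) ∘ ⇑y.2) Finset.univ = y.1.1 := by
      rw [← Finset.image_image, Finset.image_univ_equiv, image_orderEmbOfFin]
    have hTeq : x.1 = y.1 := Subtype.ext (by rw [← himx, ← himy, h])
    have : x.2 = y.2 := by
      obtain ⟨⟨T, hT⟩, ρ⟩ := x
      obtain ⟨⟨T', hT'⟩, ρ'⟩ := y
      obtain rfl : T = T' := congrArg Subtype.val hTeq
      refine Equiv.coe_fn_injective ?_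
      have hinj := (Finset.orderEmbOfFin T hT).injective
      funext j
      exact hinj (congrFun h j)
    exact Prod.ext hTeq this
  · intro p hp
    simp only [Finset.mem_filter, Finset.mem_univ, true_and] at hp
    obtain ⟨T, hT, ρ, rfl⟩ := exists_perm_factor hp
    exact ⟨(⟨T, hT⟩, ρ), Finset.mem_univ _, rfl⟩
  · intros; rfl

/-- fiber count -/
def cnt {k m : ℕ} (a : Fin k → Fin m) (x : Fin m) : ℕ :=
  (Finset.univ.filter (fun j => a j = x)).card

lemma prod_comp_eq_prod_pow {K : Type*} [CommRing K] {k m : ℕ}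
    (g : Fin m → K) (a : Fin k → Fin m) :
    ∏ j, g (a j) = ∏ x, g x ^ cnt a x := by
  rw [← Finset.prod_fiberwise Finset.univ a (fun j => g (a j))]
  refine Finset.prod_congr rfl fun x _ => ?_
  rw [Finset.prod_congr rfl (fun j hj => ?_), Finset.prod_const]
  · rfl
  · simp only [Finset.mem_filter] at hj
    rw [hj.2]

lemma sum_eps_prod_pow {K : Type*} [CommRing K] {m : ℕ} (c : Fin m → ℕ) :
    ∑ ε : Fin m → Bool, ∏ x, (if ε x then (1:K) else -1) ^ c x
      = ∏ x, ((1:K) ^ c x + (-1) ^ c x) := by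
  have : ∀ x : Fin m, (1:K) ^ c x + (-1) ^ c x
      = ∑ b : Bool, (if b then (1:K) else -1) ^ c x := by
    intro x; rw [Fintype.sum_bool]; norm_num
  simp only [this]
  rw [Finset.prod_univ_sum, Fintype.piFinset_univ]

lemma cnt_comp_perm {k m : ℕ} (a : Fin k → Fin m) (π : Equiv.Perm (Fin k)) (x : Fin m) :
    cnt (a ∘ π) x = cnt a x := by
  unfold cnt
  refine Finset.card_bij (fun j _ => π j) ?_ ?_ ?_
  · intro j hj; simp only [Finset.mem_filter, Finset.mem_univ, true_and] at hj ⊢; exact hj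
  · intro i _ j _ h; exact π.injective h
  · intro j hj
    simp only [Finset.mem_filter, Finset.mem_univ, true_and] at hj
    exact ⟨π.symm j, by simp [Finset.mem_filter, hj], by simp⟩

lemma exists_comp_perm {k m : ℕ} {a b : Fin k → Fin m} (ha : Function.Injective a)
    (h : ∀ x, Even (cnt a x + cnt b x)) : ∃ π : Equiv.Perm (Fin k), b = a ∘ π := by
  classical
  have hca1 : ∀ x, cnt a x ≤ 1 := by
    intro x
    refine Finset.card_le_one.mpr fun i hi j hj => ?_
    simp only [Finset.mem_filter] at hi hj
    exact ha (hi.2.trans hj.2.symm)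
  have hsa : ∑ x, cnt a x = k := by
    have := Finset.card_eq_sum_card_fiberwise (f := a)
      (fun j (_ : j ∈ Finset.univ) => Finset.mem_univ (a j))
    simpa [cnt] using this.symm
  have hsb : ∑ x, cnt b x = k := by
    have := Finset.card_eq_sum_card_fiberwise (f := b)
      (fun j (_ : j ∈ Finset.univ) => Finset.mem_univ (b j))
    simpa [cnt] using this.symm
  have hle : ∀ x, cnt a x ≤ cnt b x := by
    intro x
    have h1 := (Nat.even_iff).mp (h x)
    have h2 := hca1 x
    omega
  have heq : ∀ x, cnt a x = cnt b x := by
    by_contra hc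
    push_neg at hc
    obtain ⟨x, hx⟩ := hc
    have : ∑ x, cnt a x < ∑ x, cnt b x :=
      Finset.sum_lt_sum (fun i _ => hle i) ⟨x, Finset.mem_univ x, lt_of_le_of_ne (hle x) hx⟩
    omega
  have hcb1 : ∀ x, cnt b x ≤ 1 := fun x => (heq x) ▸ hca1 x
  have hbmem : ∀ j, j ∈ Finset.univ.filter (fun i => b i = b j) :=
    fun j => Finset.mem_filter.mpr ⟨Finset.mem_univ j, rfl⟩
  have hex : ∀ j, ∃ i, a i = b j := by
    intro j
    have h1 : 1 ≤ cnt b (b j) := Finset.card_pos.mpr ⟨j, hbmem j⟩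
    have h2 : 1 ≤ cnt a (b j) := (heq (b j)) ▸ h1
    obtain ⟨i, hi⟩ := Finset.card_pos.mp h2
    simp only [Finset.mem_filter] at hi
    exact ⟨i, hi.2⟩
  choose f hf using hex
  have hfinj : Function.Injective f := by
    intro i j hij
    have : b i = b j := by rw [← hf i, ← hf j, hij]
    exact Finset.card_le_one.mp (hcb1 (b i)) i (hbmem i)
      j (Finset.mem_filter.mpr ⟨Finset.mem_univ j, this.symm⟩)
  refine ⟨Equiv.ofBijective f (Finite.injective_iff_bijective.mp hfinj), ?_⟩
  funext j
  simp only [Function.comp_apply, Equiv.ofBijective_apply, hf j]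

lemma sum_eps_eval {K : Type*} [CommRing K] {k m : ℕ} (a b : Fin k → Fin m) :
    ∑ ε : Fin m → Bool,
        ∏ j, ((if ε (a j) then (1:K) else -1) * (if ε (b j) then 1 else -1))
      = if ∀ x, Even (cnt a x + cnt b x) then (2^m : K) else 0 := by
  have h1 : ∀ ε : Fin m → Bool,
      ∏ j, ((if ε (a j) then (1:K) else -1) * (if ε (b j) then 1 else -1))
      = ∏ x, (if ε x then (1:K) else -1) ^ (cnt a x + cnt b x) := by
    intro ε
    rw [Finset.prod_mul_distrib, prod_comp_eq_prod_pow (fun x => if ε x then (1:K) else -1) a,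
        prod_comp_eq_prod_pow (fun x => if ε x then (1:K) else -1) b, ← Finset.prod_mul_distrib]
    exact Finset.prod_congr rfl fun x _ => (pow_add _ _ _).symm
  simp only [h1]
  rw [sum_eps_prod_pow]
  by_cases hc : ∀ x, Even (cnt a x + cnt b x)
  · rw [if_pos hc]
    have h2 : ∀ x : Fin m, (1:K) ^ (cnt a x + cnt b x) + (-1) ^ (cnt a x + cnt b x) = 2 := by
      intro x; rw [one_pow, (hc x).neg_one_pow]; norm_num
    rw [Finset.prod_congr rfl (fun x _ => h2 x), Finset.prod_const, Finset.card_univ,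
      Fintype.card_fin]
  · rw [if_neg hc]
    push_neg at hc
    obtain ⟨x, hx⟩ := hc
    refine Finset.prod_eq_zero (Finset.mem_univ x) ?_
    rw [one_pow, (Nat.not_even_iff_odd.mp hx).neg_one_pow]
    ring

lemma sum_eps_mul {K : Type*} [CommRing K] {k m : ℕ} {a : Fin k → Fin m}
    (ha : Function.Injective a) (V : (Fin k → Fin m) → K) :
    ∑ b : Fin k → Fin m, (∑ ε : Fin m → Bool,
        ∏ j, ((if ε (a j) then (1:K) else -1) * (if ε (b j) then 1 else -1))) * V b
      = 2^m * ∑ π : Equiv.Perm (Fin k), V (a ∘ π) := by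
  classical
  have h0 : (∑ b : Fin k → Fin m, (∑ ε : Fin m → Bool,
        ∏ j, ((if ε (a j) then (1:K) else -1) * (if ε (b j) then 1 else -1))) * V b)
      = ∑ b : Fin k → Fin m,
          (if ∀ x, Even (cnt a x + cnt b x) then (2^m : K) else 0) * V b :=
    Finset.sum_congr rfl fun b _ => by rw [sum_eps_eval a b]
  rw [h0]
  simp only [ite_mul, zero_mul]
  rw [← Finset.sum_filter, Finset.mul_sum]
  refine (Finset.sum_bij (fun (π : Equiv.Perm (Fin k)) _ => a ∘ ⇑π) ?_ ?_ ?_ ?_).symm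
  · intro π _
    simp only [Finset.mem_filter, Finset.mem_univ, true_and]
    intro x
    rw [cnt_comp_perm]
    exact ⟨cnt a x, rfl⟩
  · intro π _ π' _ h
    exact Equiv.coe_fn_injective (funext fun j => ha (congrFun h j))
  · intro b hb
    simp only [Finset.mem_filter, Finset.mem_univ, true_and] at hb
    obtain ⟨π, rfl⟩ := exists_comp_perm ha hb
    exact ⟨π, Finset.mem_univ _, rfl⟩
  · intros; rfl
lemma det_submatrix_comp_perm {K : Type*} [CommRing K] {k n m : ℕ}
    (X : Matrix (Fin n) (Fin m) K) (e : Fin k → Fin n) (f : Fin k → Fin m)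
    (ρ : Equiv.Perm (Fin k)) :
    (X.submatrix e (f ∘ ρ)).det = ((Equiv.Perm.sign ρ : ℤ) : K) * (X.submatrix e f).det := by
  have h : X.submatrix e (f ∘ ⇑ρ) = (X.submatrix e f).submatrix id ⇑ρ := rfl
  rw [h, Matrix.det_permute']

lemma sum_perm_sign_prod {K : Type*} [CommRing K] {k : ℕ} (Z : Matrix (Fin k) (Fin k) K) :
    ∑ ρ : Equiv.Perm (Fin k), ((Equiv.Perm.sign ρ : ℤ) : K) * ∏ i, Z (ρ i) i = Z.det :=
  (Matrix.det_apply' Z).symm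

lemma cauchy_binet {K : Type*} [CommRing K] {k n m : ℕ} (B : Matrix (Fin n) (Fin m) K)
    (C : Matrix (Fin m) (Fin n) K) (e : Fin k → Fin n) :
    ((B * C).submatrix e e).det
      = ∑ T : {s : Finset (Fin m) // s.card = k},
          (B.submatrix e (T.1.orderEmbOfFin T.2)).det *
            (C.submatrix (T.1.orderEmbOfFin T.2) e).det := by
  have h1 : (B * C).submatrix e e = (B.submatrix e id) * (C.submatrix id e) :=
    Matrix.submatrix_mul B C e id e Function.bijective_id
  rw [h1, det_mul_expand]
  have h2 : ∀ p : Fin k → Fin m,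
      ((B.submatrix e id).submatrix id p).det * ∏ i, (C.submatrix id e) (p i) i
      = (B.submatrix e p).det * ∏ i, C (p i) (e i) := fun p => rfl
  rw [Finset.sum_congr rfl fun p _ => h2 p]
  rw [sum_inj_group (fun p => (B.submatrix e p).det * ∏ i, C (p i) (e i))
    (fun p hp => by rw [det_submatrix_of_not_injective _ _ _ hp, zero_mul])]
  refine Finset.sum_congr rfl fun T _ => ?_
  have h3 : ∀ ρ : Equiv.Perm (Fin k),
      (B.submatrix e ((T.1.orderEmbOfFin T.2) ∘ ρ)).det *
          ∏ i, C (((T.1.orderEmbOfFin T.2) ∘ ρ) i) (e i)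
      = (B.submatrix e (T.1.orderEmbOfFin T.2)).det *
        (((Equiv.Perm.sign ρ : ℤ) : K) *
          ∏ i, (C.submatrix (T.1.orderEmbOfFin T.2) e) (ρ i) i) := by
    intro ρ
    rw [det_submatrix_comp_perm]
    simp only [Matrix.submatrix_apply, Function.comp_apply]
    ring
  rw [Finset.sum_congr rfl fun ρ _ => h3 ρ, ← Finset.mul_sum, sum_perm_sign_prod]

lemma permMatrix_inv {K : Type*} [CommRing K] {m : ℕ} (σ : Equiv.Perm (Fin m)) :
    (σ.permMatrix K)⁻¹ = (σ⁻¹).permMatrix K := by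
  apply Matrix.inv_eq_right_inv
  rw [Equiv.Perm.permMatrix, PEquiv.toMatrix_toPEquiv_mul]
  ext i j
  simp [Equiv.Perm.permMatrix, PEquiv.toMatrix_apply, Equiv.toPEquiv_apply, Matrix.one_apply,
    Equiv.symm_apply_eq]

lemma subtypeCongr_apply' {α : Type*} {p q : α → Prop} [DecidablePred p] [DecidablePred q]
    (e : { x // p x } ≃ { x // q x }) (f : { x // ¬p x } ≃ { x // ¬q x }) (a : α) :
    Equiv.subtypeCongr e f a = if h : p a then (e ⟨a, h⟩ : α) else (f ⟨a, h⟩ : α) := by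
  by_cases h : p a
  · simp [Equiv.subtypeCongr, Equiv.sumCompl_symm_apply_of_pos h, h]
  · simp [Equiv.subtypeCongr, Equiv.sumCompl_symm_apply_of_neg h, h]

def perm_image_equiv {m : ℕ} (T T' : Finset (Fin m)) (h : T.card = T'.card) :
    ({x // x ∈ T} ≃ {x // x ∈ T'}) × ({x // x ∉ T} ≃ {x // x ∉ T'})
      ≃ {σ : Equiv.Perm (Fin m) // Finset.image (⇑σ) T = T'} where
  toFun e := ⟨Equiv.subtypeCongr e.1 e.2, by
    have hmem : ∀ x ∈ T, Equiv.subtypeCongr e.1 e.2 x ∈ T' := by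
      intro x hx
      rw [subtypeCongr_apply', dif_pos hx]
      exact (e.1 ⟨x, hx⟩).2
    refine Finset.eq_of_subset_of_card_le ?_ ?_
    · intro y hy
      obtain ⟨x, hx, rfl⟩ := Finset.mem_image.mp hy
      exact hmem x hx
    · rw [Finset.card_image_of_injective _ (Equiv.subtypeCongr e.1 e.2).injective, h]⟩
  invFun σp :=
    have hiff : ∀ x, x ∈ T ↔ σp.1 x ∈ T' := by
      obtain ⟨σ, hσ⟩ := σp
      dsimp only
      intro x
      constructor
      · intro hx; rw [← hσ]; exact Finset.mem_image_of_mem _ hx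
      · intro hx
        rw [← hσ] at hx
        obtain ⟨y, hy, hyx⟩ := Finset.mem_image.mp hx
        rwa [← σ.injective hyx]
    (σp.1.subtypeEquiv hiff, σp.1.subtypeEquiv (fun x => not_congr (hiff x)))
  left_inv := by
    rintro ⟨e₁, e₂⟩
    refine Prod.ext ?_ ?_ <;> dsimp only <;>
      · refine Equiv.ext fun x => Subtype.ext ?_
        obtain ⟨x, hx⟩ := x
        simp only [Equiv.subtypeEquiv_apply, subtypeCongr_apply']
        first
        | rw [dif_pos hx]
        | rw [dif_neg hx]
  right_inv := by
    rintro ⟨σ, hσ⟩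
    refine Subtype.ext (Equiv.ext fun x => ?_)
    dsimp only
    rw [subtypeCongr_apply']
    by_cases hx : x ∈ T
    · rw [dif_pos hx]; rfl
    · rw [dif_neg hx]; rfl

lemma card_perm_image {m k : ℕ} (T T' : Finset (Fin m)) (hT : T.card = k) (hT' : T'.card = k) :
    Fintype.card {σ : Equiv.Perm (Fin m) // Finset.image (⇑σ) T = T'}
      = k.factorial * (m - k).factorial := by
  classical
  rw [← Fintype.card_congr (perm_image_equiv T T' (hT.trans hT'.symm))]
  rw [Fintype.card_prod]
  have c1 : Fintype.card {x // x ∈ T} = k := by rw [Fintype.card_coe, hT]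
  have c1' : Fintype.card {x // x ∈ T'} = k := by rw [Fintype.card_coe, hT']
  have c2 : Fintype.card {x : Fin m // x ∉ T} = m - k := by
    have := Fintype.card_subtype_compl (fun x : Fin m => x ∈ T)
    rw [this, Fintype.card_fin, c1]
  have c2' : Fintype.card {x : Fin m // x ∉ T'} = m - k := by
    have := Fintype.card_subtype_compl (fun x : Fin m => x ∈ T')
    rw [this, Fintype.card_fin, c1']
  rw [Fintype.card_equiv (Fintype.equivOfCardEq (c1.trans c1'.symm)),
    Fintype.card_equiv (Fintype.equivOfCardEq (c2.trans c2'.symm)), c1, c2]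

lemma sum_perm_image {K : Type*} [AddCommMonoid K] {m k : ℕ} (T : Finset (Fin m))
    (hT : T.card = k) (G : {s : Finset (Fin m) // s.card = k} → K) :
    ∑ σ : Equiv.Perm (Fin m),
        G ⟨Finset.image (⇑σ) T, by
          rw [Finset.card_image_of_injective _ σ.injective, hT]⟩
      = (k.factorial * (m - k).factorial)
          • ∑ T' : {s : Finset (Fin m) // s.card = k}, G T' := by
  classical
  rw [← Finset.sum_fiberwise' Finset.univ
    (fun σ : Equiv.Perm (Fin m) =>
      (⟨Finset.image (⇑σ) T, by rw [Finset.card_image_of_injective _ σ.injective, hT]⟩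
        : {s : Finset (Fin m) // s.card = k})) G]
  rw [Finset.smul_sum]
  refine Finset.sum_congr rfl fun T' _ => ?_
  rw [Finset.sum_const]
  congr 1
  rw [← Fintype.card_subtype]
  rw [← card_perm_image T T'.1 hT T'.2]
  apply Fintype.card_congr
  apply Equiv.subtypeEquivRight
  intro σ
  constructor
  · intro h; rw [← h]
  · intro h; exact Subtype.ext h
lemma conj_entry_s4 {K : Type*} [CommRing K] {m n : ℕ} (A : Matrix (Fin m) (Fin m) K)
    (B : Matrix (Fin n) (Fin m) K) (C : Matrix (Fin m) (Fin n) K)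
    (σ : Equiv.Perm (Fin m)) (ε : Fin m → Bool) :
    B * signMatrix K ε * σ.permMatrix K * A * (σ.permMatrix K)⁻¹ * signMatrix K ε * C
      = ((B * signMatrix K ε).submatrix id ⇑σ⁻¹)
          * (A * ((signMatrix K ε * C).submatrix ⇑σ⁻¹ id)) := by
  rw [permMatrix_inv]
  rw [Matrix.mul_assoc (B * signMatrix K ε * σ.permMatrix K * A) ((σ⁻¹).permMatrix K)
      (signMatrix K ε),
    Matrix.mul_assoc (B * signMatrix K ε * σ.permMatrix K * A)
      ((σ⁻¹).permMatrix K * signMatrix K ε) C,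
    Matrix.mul_assoc ((σ⁻¹).permMatrix K) (signMatrix K ε) C]
  have h1 : B * signMatrix K ε * σ.permMatrix K
      = (B * signMatrix K ε).submatrix id ⇑σ.symm :=
    PEquiv.mul_toMatrix_toPEquiv (B * signMatrix K ε) σ
  have h2 : (σ⁻¹).permMatrix K * (signMatrix K ε * C)
      = (signMatrix K ε * C).submatrix ⇑σ⁻¹ id :=
    PEquiv.toMatrix_toPEquiv_mul σ⁻¹ (signMatrix K ε * C)
  rw [h1, h2, Matrix.mul_assoc]
  rfl

lemma minor_expand {K : Type*} [CommRing K] {m n k : ℕ} (A : Matrix (Fin m) (Fin m) K)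
    (B : Matrix (Fin n) (Fin m) K) (C : Matrix (Fin m) (Fin n) K)
    (σ : Equiv.Perm (Fin m)) (ε : Fin m → Bool) (e : Fin k → Fin n) :
    ((B * signMatrix K ε * σ.permMatrix K * A * (σ.permMatrix K)⁻¹ * signMatrix K ε * C).submatrix
        e e).det
      = ∑ p : Fin k → Fin m, ∑ q : Fin k → Fin m,
          (∏ j, ((if ε (σ⁻¹ (p j)) then (1:K) else -1) * (if ε (σ⁻¹ (q j)) then 1 else -1)))
            * ((B.submatrix e (⇑σ⁻¹ ∘ p)).det
                * ∏ i, (A (p i) (q i) * C (σ⁻¹ (q i)) (e i))) := by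
  rw [conj_entry_s4]
  set B₁ := (B * signMatrix K ε).submatrix id ⇑σ⁻¹ with hB₁
  set C₁ := (signMatrix K ε * C).submatrix ⇑σ⁻¹ id with hC₁
  have h1 : (B₁ * (A * C₁)).submatrix e e
      = (B₁.submatrix e id) * ((A * C₁).submatrix id e) :=
    Matrix.submatrix_mul _ _ e id e Function.bijective_id
  rw [h1, det_mul_expand]
  refine Finset.sum_congr rfl fun p _ => ?_
  -- left det factor
  have hdet : ((B₁.submatrix e id).submatrix id p).det
      = (∏ j, (if ε (σ⁻¹ (p j)) then (1:K) else -1)) * (B.submatrix e (⇑σ⁻¹ ∘ p)).det := by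
    have heq : (B₁.submatrix e id).submatrix id p
        = Matrix.of fun i j => (if ε (σ⁻¹ (p j)) then (1:K) else -1)
            * (B.submatrix e (⇑σ⁻¹ ∘ p)) i j := by
      ext i j
      simp only [Matrix.submatrix_apply, hB₁, Matrix.of_apply, id_eq, Function.comp_apply,
        signMatrix, Matrix.mul_diagonal]
      ring
    rw [heq, Matrix.det_mul_row]
  -- right product factor
  have hprod : ∏ i, (A * C₁).submatrix id e (p i) i
      = ∑ q : Fin k → Fin m, ∏ i, ((if ε (σ⁻¹ (q i)) then (1:K) else -1)
          * (A (p i) (q i) * C (σ⁻¹ (q i)) (e i))) := by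
    have hC : ∀ (j : Fin m) (s : Fin n), C₁ j s
        = (if ε (σ⁻¹ j) then (1:K) else -1) * C (σ⁻¹ j) s := by
      intro j s
      simp [hC₁, signMatrix, Matrix.diagonal_mul]
    have : ∀ i, (A * C₁).submatrix id e (p i) i
        = ∑ j, A (p i) j * ((if ε (σ⁻¹ j) then (1:K) else -1) * C (σ⁻¹ j) (e i)) := by
      intro i
      simp only [Matrix.submatrix_apply, id_eq]
      rw [Matrix.mul_apply]
      exact Finset.sum_congr rfl fun j _ => by rw [hC]
    rw [Finset.prod_congr rfl fun i _ => this i, Finset.prod_univ_sum, Fintype.piFinset_univ]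
    refine Finset.sum_congr rfl fun q _ => Finset.prod_congr rfl fun i _ => by ring
  rw [hdet, hprod, Finset.mul_sum]
  refine Finset.sum_congr rfl fun q _ => ?_
  simp only [Finset.prod_mul_distrib]
  ring
lemma inner_perm_sum {K : Type*} [CommRing K] {k m n : ℕ} (A : Matrix (Fin m) (Fin m) K)
    (C : Matrix (Fin m) (Fin n) K) (f : Fin k → Fin m) (w : Fin m → Fin m)
    (e : Fin k → Fin n) :
    ∑ ρ : Equiv.Perm (Fin k), ∑ μ : Equiv.Perm (Fin k),
        ((Equiv.Perm.sign ρ : ℤ) : K) * ∏ i, (A (f (ρ i)) (f (μ i)) * C (w (f (μ i))) (e i))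
      = (A.submatrix f f).det * (C.submatrix (w ∘ f) e).det := by
  rw [Finset.sum_comm]
  have key : ∀ μ : Equiv.Perm (Fin k),
      ∑ ρ : Equiv.Perm (Fin k),
          ((Equiv.Perm.sign ρ : ℤ) : K) * ∏ i, (A (f (ρ i)) (f (μ i)) * C (w (f (μ i))) (e i))
        = (A.submatrix f f).det
            * (((Equiv.Perm.sign μ : ℤ) : K)
                * ∏ i, (C.submatrix (w ∘ f) e) (μ i) i) := by
    intro μ
    have h1 : ∀ ρ : Equiv.Perm (Fin k),
        ((Equiv.Perm.sign ρ : ℤ) : K) * ∏ i, (A (f (ρ i)) (f (μ i)) * C (w (f (μ i))) (e i))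
          = (((Equiv.Perm.sign ρ : ℤ) : K) * ∏ i, A (f (ρ i)) (f (μ i)))
              * ∏ i, C (w (f (μ i))) (e i) := by
      intro ρ
      rw [Finset.prod_mul_distrib]
      ring
    rw [Finset.sum_congr rfl fun ρ _ => h1 ρ, ← Finset.sum_mul]
    have h2 : ∑ ρ : Equiv.Perm (Fin k),
        ((Equiv.Perm.sign ρ : ℤ) : K) * ∏ i, A (f (ρ i)) (f (μ i))
        = ((Equiv.Perm.sign μ : ℤ) : K) * (A.submatrix f f).det := by
      rw [← Fintype.sum_bijective (fun ν => μ * ν)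
        (Group.mulLeft_bijective μ) _
        (fun ρ => ((Equiv.Perm.sign ρ : ℤ) : K) * ∏ i, A (f (ρ i)) (f (μ i)))
        (fun ν => rfl)]
      have h3 : ∀ ν : Equiv.Perm (Fin k),
          ((Equiv.Perm.sign (μ * ν) : ℤ) : K) * ∏ i, A (f ((μ * ν) i)) (f (μ i))
            = ((Equiv.Perm.sign μ : ℤ) : K) * (((Equiv.Perm.sign ν : ℤ) : K)
                * ∏ i, ((A.submatrix f f).submatrix ⇑μ ⇑μ) (ν i) i) := by
        intro ν
        rw [Equiv.Perm.sign_mul]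
        push_cast
        simp only [Matrix.submatrix_apply, Equiv.Perm.mul_apply, Equiv.Perm.coe_mul,
          Function.comp_apply]
        ring
      rw [Finset.sum_congr rfl fun ν _ => h3 ν, ← Finset.mul_sum, sum_perm_sign_prod,
        Matrix.det_submatrix_equiv_self]
    rw [h2]
    simp only [Matrix.submatrix_apply, Function.comp_apply]
    ring
  rw [Finset.sum_congr rfl fun μ _ => key μ, ← Finset.mul_sum, sum_perm_sign_prod]

lemma sum_eps_minor {K : Type*} [CommRing K] {m n k : ℕ} (A : Matrix (Fin m) (Fin m) K)
    (B : Matrix (Fin n) (Fin m) K) (C : Matrix (Fin m) (Fin n) K)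
    (σ : Equiv.Perm (Fin m)) (e : Fin k → Fin n) :
    ∑ ε : Fin m → Bool,
        ((B * signMatrix K ε * σ.permMatrix K * A * (σ.permMatrix K)⁻¹ * signMatrix K ε
            * C).submatrix e e).det
      = 2 ^ m * ∑ T : {s : Finset (Fin m) // s.card = k},
          (B.submatrix e (⇑σ⁻¹ ∘ (T.1.orderEmbOfFin T.2))).det
            * ((A.submatrix (T.1.orderEmbOfFin T.2) (T.1.orderEmbOfFin T.2)).det
              * (C.submatrix (⇑σ⁻¹ ∘ (T.1.orderEmbOfFin T.2)) e).det) := by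
  classical
  rw [Finset.sum_congr rfl fun ε (_ : ε ∈ Finset.univ) => minor_expand A B C σ ε e]
  rw [Finset.sum_comm]
  rw [Finset.sum_congr rfl fun p (_ : p ∈ (Finset.univ : Finset (Fin k → Fin m))) =>
    Finset.sum_comm]
  -- now : ∑ p, ∑ q, ∑ ε, E * W
  have hinner : ∀ p : Fin k → Fin m, Function.Injective p →
      (∑ q : Fin k → Fin m, ∑ ε : Fin m → Bool,
        (∏ j, ((if ε (σ⁻¹ (p j)) then (1:K) else -1) * (if ε (σ⁻¹ (q j)) then 1 else -1)))
          * ((B.submatrix e (⇑σ⁻¹ ∘ p)).det * ∏ i, (A (p i) (q i) * C (σ⁻¹ (q i)) (e i))))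
      = 2 ^ m * ∑ π : Equiv.Perm (Fin k),
          (B.submatrix e (⇑σ⁻¹ ∘ p)).det
            * ∏ i, (A (p i) (p (π i)) * C (σ⁻¹ (p (π i))) (e i)) := by
    intro p hp
    rw [Finset.sum_congr rfl fun q (_ : q ∈ Finset.univ) => (Finset.sum_mul _ _ _).symm]
    have hq : ∑ q : Fin k → Fin m,
        (∑ ε : Fin m → Bool,
          ∏ j, ((if ε (σ⁻¹ (p j)) then (1:K) else -1) * (if ε (σ⁻¹ (q j)) then 1 else -1)))
          * ((B.submatrix e (⇑σ⁻¹ ∘ p)).det * ∏ i, (A (p i) (q i) * C (σ⁻¹ (q i)) (e i)))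
        = ∑ b : Fin k → Fin m,
        (∑ ε : Fin m → Bool,
          ∏ j, ((if ε (σ⁻¹ (p j)) then (1:K) else -1) * (if ε (b j) then 1 else -1)))
          * ((B.submatrix e (⇑σ⁻¹ ∘ p)).det
              * ∏ i, (A (p i) (σ (b i)) * C (b i) (e i))) := by
      refine (Fintype.sum_bijective (fun b => ⇑σ ∘ b) ?_ _ _ (fun b => ?_)).symm
      · constructor
        · intro b b' hbb; funext j; exact σ.injective (congrFun hbb j)
        · intro q; exact ⟨⇑σ⁻¹ ∘ q, funext fun j => by simp⟩
      · simp only [Function.comp_apply, ← Equiv.Perm.mul_apply, inv_mul_cancel, Equiv.Perm.one_apply]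
    rw [hq]
    have ha : Function.Injective (fun j => σ⁻¹ (p j)) :=
      fun x y hxy => hp ((Equiv.injective σ⁻¹) hxy)
    have hkey := sum_eps_mul (K := K) ha
      (fun b => (B.submatrix e (⇑σ⁻¹ ∘ p)).det * ∏ i, (A (p i) (σ (b i)) * C (b i) (e i)))
    rw [hkey]
    congr 1
    refine Finset.sum_congr rfl fun π _ => ?_
    simp only [Function.comp_apply, ← Equiv.Perm.mul_apply, mul_inv_cancel, Equiv.Perm.one_apply]
  -- kill non-injective p
  have hF0 : ∀ p : Fin k → Fin m, ¬ Function.Injective p →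
      (∑ q : Fin k → Fin m, ∑ ε : Fin m → Bool,
        (∏ j, ((if ε (σ⁻¹ (p j)) then (1:K) else -1) * (if ε (σ⁻¹ (q j)) then 1 else -1)))
          * ((B.submatrix e (⇑σ⁻¹ ∘ p)).det * ∏ i, (A (p i) (q i) * C (σ⁻¹ (q i)) (e i))))
      = 0 := by
    intro p hp
    have hp' : ¬ Function.Injective (⇑σ⁻¹ ∘ p) := by
      intro hc
      exact hp (fun x y hxy => hc (by simp [Function.comp_apply, hxy]))
    rw [det_submatrix_of_not_injective _ _ _ hp']
    simp
  rw [sum_inj_group _ hF0]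
  rw [Finset.mul_sum]
  refine Finset.sum_congr rfl fun T _ => ?_
  set et : Fin k → Fin m := ⇑(T.1.orderEmbOfFin T.2) with het
  have hinj : ∀ ρ : Equiv.Perm (Fin k), Function.Injective (et ∘ ⇑ρ) :=
    fun ρ => ((T.1.orderEmbOfFin T.2).injective).comp ρ.injective
  rw [Finset.sum_congr rfl fun ρ (_ : ρ ∈ Finset.univ) => hinner _ (hinj ρ)]
  have hterm : ∀ ρ : Equiv.Perm (Fin k),
      (2^m : K) * (∑ π : Equiv.Perm (Fin k), (B.submatrix e (⇑σ⁻¹ ∘ (et ∘ ⇑ρ))).det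
          * ∏ i, (A ((et ∘ ⇑ρ) i) ((et ∘ ⇑ρ) (π i)) * C (σ⁻¹ ((et ∘ ⇑ρ) (π i))) (e i)))
      = (2^m * (B.submatrix e (⇑σ⁻¹ ∘ et)).det)
          * ∑ μ : Equiv.Perm (Fin k), ((Equiv.Perm.sign ρ : ℤ) : K)
              * ∏ i, (A (et (ρ i)) (et (μ i)) * C (σ⁻¹ (et (μ i))) (e i)) := by
    intro ρ
    have hcomp : ⇑σ⁻¹ ∘ (et ∘ ⇑ρ) = (⇑σ⁻¹ ∘ et) ∘ ⇑ρ := rfl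
    have hdet := det_submatrix_comp_perm B e (⇑σ⁻¹ ∘ et) ρ
    rw [hcomp, hdet]
    rw [← Fintype.sum_bijective (fun π => ρ * π) (Group.mulLeft_bijective ρ)
        (fun π => ((Equiv.Perm.sign ρ : ℤ) : K)
          * ∏ i, (A ((et ∘ ⇑ρ) i) ((et ∘ ⇑ρ) (π i)) * C (σ⁻¹ ((et ∘ ⇑ρ) (π i))) (e i)))
        (fun μ => ((Equiv.Perm.sign ρ : ℤ) : K)
          * ∏ i, (A (et (ρ i)) (et (μ i)) * C (σ⁻¹ (et (μ i))) (e i)))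
        (fun π => by simp [Equiv.Perm.mul_apply])]
    rw [Finset.mul_sum, Finset.mul_sum]
    refine Finset.sum_congr rfl fun π _ => ?_
    simp only [Function.comp_apply]
    ring
  rw [Finset.sum_congr rfl fun ρ (_ : ρ ∈ Finset.univ) => hterm ρ, ← Finset.mul_sum,
    inner_perm_sum A C et ⇑σ⁻¹ e]
  ring

lemma det_submatrix_comp_perm_row {K : Type*} [CommRing K] {k n m : ℕ}
    (X : Matrix (Fin m) (Fin n) K) (f : Fin k → Fin m) (e : Fin k → Fin n)
    (ρ : Equiv.Perm (Fin k)) :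
    (X.submatrix (f ∘ ⇑ρ) e).det = ((Equiv.Perm.sign ρ : ℤ) : K) * (X.submatrix f e).det := by
  have h : X.submatrix (f ∘ ⇑ρ) e = (X.submatrix f e).submatrix ⇑ρ id := rfl
  rw [h, Matrix.det_permute]

lemma sum_sigma_BC {K : Type*} [CommRing K] {m n k : ℕ} (B : Matrix (Fin n) (Fin m) K)
    (C : Matrix (Fin m) (Fin n) K) (eS : Fin k → Fin n)
    (T : {s : Finset (Fin m) // s.card = k}) :
    ∑ σ : Equiv.Perm (Fin m),
        (B.submatrix eS (⇑σ⁻¹ ∘ ⇑(T.1.orderEmbOfFin T.2))).det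
          * (C.submatrix (⇑σ⁻¹ ∘ ⇑(T.1.orderEmbOfFin T.2)) eS).det
      = (k.factorial * (m - k).factorial)
          • ∑ T' : {s : Finset (Fin m) // s.card = k},
              (B.submatrix eS (T'.1.orderEmbOfFin T'.2)).det
                * (C.submatrix (T'.1.orderEmbOfFin T'.2) eS).det := by
  classical
  have hinv : ∑ σ : Equiv.Perm (Fin m),
      (B.submatrix eS (⇑σ⁻¹ ∘ ⇑(T.1.orderEmbOfFin T.2))).det
        * (C.submatrix (⇑σ⁻¹ ∘ ⇑(T.1.orderEmbOfFin T.2)) eS).det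
      = ∑ σ : Equiv.Perm (Fin m),
      (B.submatrix eS (⇑σ ∘ ⇑(T.1.orderEmbOfFin T.2))).det
        * (C.submatrix (⇑σ ∘ ⇑(T.1.orderEmbOfFin T.2)) eS).det :=
    Fintype.sum_equiv (Equiv.inv (Equiv.Perm (Fin m))) _ _ (fun σ => rfl)
  rw [hinv]
  have hper : ∀ σ : Equiv.Perm (Fin m),
      (B.submatrix eS (⇑σ ∘ ⇑(T.1.orderEmbOfFin T.2))).det
        * (C.submatrix (⇑σ ∘ ⇑(T.1.orderEmbOfFin T.2)) eS).det
      = (fun T' : {s : Finset (Fin m) // s.card = k} =>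
          (B.submatrix eS (T'.1.orderEmbOfFin T'.2)).det
            * (C.submatrix (T'.1.orderEmbOfFin T'.2) eS).det)
          ⟨Finset.image (⇑σ) T.1, by
            rw [Finset.card_image_of_injective _ σ.injective, T.2]⟩ := by
    intro σ
    have hσT : Function.Injective (⇑σ ∘ ⇑(T.1.orderEmbOfFin T.2)) :=
      σ.injective.comp (T.1.orderEmbOfFin T.2).injective
    obtain ⟨T'', hT'', ρ, heq⟩ := exists_perm_factor hσT
    have him : Finset.image (⇑σ) T.1 = T'' := by
      have h1 : Finset.image (⇑σ) T.1
          = Finset.image (⇑σ ∘ ⇑(T.1.orderEmbOfFin T.2)) Finset.univ := by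
        rw [← Finset.image_image, image_orderEmbOfFin T.1 T.2]
      rw [h1, heq, ← Finset.image_image, Finset.image_univ_equiv, image_orderEmbOfFin]
    subst him
    have hsgn : ((Equiv.Perm.sign ρ : ℤ) : K) * ((Equiv.Perm.sign ρ : ℤ) : K) = 1 := by
      rcases Int.units_eq_one_or (Equiv.Perm.sign ρ) with h | h <;> rw [h] <;> norm_num
    dsimp only
    have hBC : (B.submatrix eS (⇑σ ∘ ⇑(T.1.orderEmbOfFin T.2))).det
        * (C.submatrix (⇑σ ∘ ⇑(T.1.orderEmbOfFin T.2)) eS).det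
        = ((Equiv.Perm.sign ρ : ℤ) : K)
            * (B.submatrix eS ((Finset.image (⇑σ) T.1).orderEmbOfFin hT'')).det
          * (((Equiv.Perm.sign ρ : ℤ) : K)
            * (C.submatrix (⇑((Finset.image (⇑σ) T.1).orderEmbOfFin hT'')) eS).det) := by
      rw [heq, det_submatrix_comp_perm B eS (⇑((Finset.image (⇑σ) T.1).orderEmbOfFin hT'')) ρ,
        det_submatrix_comp_perm_row C (⇑((Finset.image (⇑σ) T.1).orderEmbOfFin hT'')) eS ρ]
    rw [hBC]
    have : ∀ x y : K, ((Equiv.Perm.sign ρ : ℤ) : K) * x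
        * (((Equiv.Perm.sign ρ : ℤ) : K) * y) = (((Equiv.Perm.sign ρ : ℤ) : K)
          * ((Equiv.Perm.sign ρ : ℤ) : K)) * (x * y) := fun x y => by ring
    rw [this, hsgn, one_mul]
  rw [Finset.sum_congr rfl fun σ _ => hper σ]
  exact sum_perm_image T.1 T.2 (fun T' => (B.submatrix eS (T'.1.orderEmbOfFin T'.2)).det
    * (C.submatrix (T'.1.orderEmbOfFin T'.2) eS).det)

theorem sum_principalMinorSum_conj_mul
    {K : Type*} [CommRing K] {m n : ℕ}
    (A : Matrix (Fin m) (Fin m) K) (B : Matrix (Fin n) (Fin m) K)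
    (C : Matrix (Fin m) (Fin n) K) (k : ℕ) (hkn : k ≤ n) (hkm : k ≤ m) :
    (∑ σ : Equiv.Perm (Fin m), ∑ ε : Fin m → Bool,
        principalMinorSum
          (B * signMatrix K ε * σ.permMatrix K * A * (σ.permMatrix K)⁻¹ * signMatrix K ε * C) k)
      = (2 ^ m * k.factorial * (m - k).factorial : ℕ) *
          principalMinorSum (B * C) k * principalMinorSum A k := by
  classical
  unfold principalMinorSum
  have h1 : ∀ σ : Equiv.Perm (Fin m),
      (∑ ε : Fin m → Bool, ∑ S : {s : Finset (Fin n) // s.card = k},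
        ((B * signMatrix K ε * σ.permMatrix K * A * (σ.permMatrix K)⁻¹ * signMatrix K ε
            * C).submatrix (S.1.orderEmbOfFin S.2) (S.1.orderEmbOfFin S.2)).det)
      = ∑ S : {s : Finset (Fin n) // s.card = k}, (2:K)^m *
          ∑ T : {s : Finset (Fin m) // s.card = k},
            (B.submatrix (S.1.orderEmbOfFin S.2) (⇑σ⁻¹ ∘ ⇑(T.1.orderEmbOfFin T.2))).det
              * ((A.submatrix (T.1.orderEmbOfFin T.2) (T.1.orderEmbOfFin T.2)).det
                * (C.submatrix (⇑σ⁻¹ ∘ ⇑(T.1.orderEmbOfFin T.2)) (S.1.orderEmbOfFin S.2)).det) := by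
    intro σ
    rw [Finset.sum_comm]
    exact Finset.sum_congr rfl fun S _ => sum_eps_minor A B C σ _
  rw [Finset.sum_congr rfl fun σ (_ : σ ∈ Finset.univ) => h1 σ]
  rw [Finset.sum_comm]
  have h3 : ∀ S : {s : Finset (Fin n) // s.card = k},
      (∑ σ : Equiv.Perm (Fin m), (2:K)^m *
          ∑ T : {s : Finset (Fin m) // s.card = k},
            (B.submatrix (S.1.orderEmbOfFin S.2) (⇑σ⁻¹ ∘ ⇑(T.1.orderEmbOfFin T.2))).det
              * ((A.submatrix (T.1.orderEmbOfFin T.2) (T.1.orderEmbOfFin T.2)).det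
                * (C.submatrix (⇑σ⁻¹ ∘ ⇑(T.1.orderEmbOfFin T.2)) (S.1.orderEmbOfFin S.2)).det))
      = ((2:K)^m * ((k.factorial * (m - k).factorial : ℕ) : K)
            * ∑ T : {s : Finset (Fin m) // s.card = k},
                (A.submatrix (T.1.orderEmbOfFin T.2) (T.1.orderEmbOfFin T.2)).det)
          * ((B * C).submatrix (S.1.orderEmbOfFin S.2) (S.1.orderEmbOfFin S.2)).det := by
    intro S
    rw [← Finset.mul_sum, Finset.sum_comm]
    have h4 : ∀ T : {s : Finset (Fin m) // s.card = k},
        (∑ σ : Equiv.Perm (Fin m),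
          (B.submatrix (S.1.orderEmbOfFin S.2) (⇑σ⁻¹ ∘ ⇑(T.1.orderEmbOfFin T.2))).det
            * ((A.submatrix (T.1.orderEmbOfFin T.2) (T.1.orderEmbOfFin T.2)).det
              * (C.submatrix (⇑σ⁻¹ ∘ ⇑(T.1.orderEmbOfFin T.2)) (S.1.orderEmbOfFin S.2)).det))
        = (A.submatrix (T.1.orderEmbOfFin T.2) (T.1.orderEmbOfFin T.2)).det
            * ((k.factorial * (m - k).factorial)
                • ((B * C).submatrix (S.1.orderEmbOfFin S.2) (S.1.orderEmbOfFin S.2)).det) := by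
      intro T
      have hr : ∀ σ : Equiv.Perm (Fin m),
          (B.submatrix (S.1.orderEmbOfFin S.2) (⇑σ⁻¹ ∘ ⇑(T.1.orderEmbOfFin T.2))).det
            * ((A.submatrix (T.1.orderEmbOfFin T.2) (T.1.orderEmbOfFin T.2)).det
              * (C.submatrix (⇑σ⁻¹ ∘ ⇑(T.1.orderEmbOfFin T.2)) (S.1.orderEmbOfFin S.2)).det)
          = (A.submatrix (T.1.orderEmbOfFin T.2) (T.1.orderEmbOfFin T.2)).det
              * ((B.submatrix (S.1.orderEmbOfFin S.2) (⇑σ⁻¹ ∘ ⇑(T.1.orderEmbOfFin T.2))).det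
                * (C.submatrix (⇑σ⁻¹ ∘ ⇑(T.1.orderEmbOfFin T.2)) (S.1.orderEmbOfFin S.2)).det) :=
        fun σ => by ring
      rw [Finset.sum_congr rfl fun σ _ => hr σ, ← Finset.mul_sum,
        sum_sigma_BC B C (⇑(S.1.orderEmbOfFin S.2)) T,
        ← cauchy_binet B C (⇑(S.1.orderEmbOfFin S.2))]
    rw [Finset.sum_congr rfl fun T _ => h4 T, ← Finset.sum_mul, nsmul_eq_mul]
    ring
  rw [Finset.sum_congr rfl fun S (_ : S ∈ Finset.univ) => h3 S, ← Finset.mul_sum]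
  push_cast
  ring
end
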